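/- Let $\Phi : [0,\infty) \to [0,\infty)$ be a strictly increasing continuous bijection with $\Phi(0) = 0$. Let $E : \mathbb{N} \to [0,\infty)$ satisfy $E(n+1) + \Phi^{-1}(E(n+1)) \leq E(n)$ for all $n \geq 0$. Let $S : [0,\infty) \to [0,\infty)$ be the solution of $S'(t) = -(I+\Phi)^{-1}(S(t))$ with $S(0) = E(0)$, where $(I+\Phi)^{-1}(y)$ denotes the unique $z \geq 0$ with $z + \Phi(z) = y$. Then $E(n) \leq S(n)$ for all $n \in \mathbb{N}$. -/

import Mathlib

/-- Lasiecka–Tataru comparison lemma: a discrete energy sequence satisfying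
`(I + Φ⁻¹) E(n+1) ≤ E(n)` is dominated by the solution of the ODE
`S' = -(I + Φ)⁻¹ ∘ S`, `S(0) = E(0)`. Here `Ψ = Φ⁻¹` and `G = (I + Φ)⁻¹`
are given via their defining properties. -/
theorem stmt_8 (Φ Ψ G : ℝ → ℝ)
    (hmono : StrictMonoOn Φ (Set.Ici 0))
    (hcont : ContinuousOn Φ (Set.Ici 0))
    (hbij : Set.BijOn Φ (Set.Ici 0) (Set.Ici 0))
    (h0 : Φ 0 = 0)
    (hΨ : ∀ y, 0 ≤ y → 0 ≤ Ψ y ∧ Φ (Ψ y) = y)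
    (hG : ∀ y, 0 ≤ y → 0 ≤ G y ∧ G y + Φ (G y) = y)
    (E : ℕ → ℝ) (hEnonneg : ∀ n, 0 ≤ E n)
    (hE : ∀ n, E (n + 1) + Ψ (E (n + 1)) ≤ E n)
    (S : ℝ → ℝ)
    (hSnonneg : ∀ t, 0 ≤ t → 0 ≤ S t)
    (hS : ∀ t, 0 ≤ t → HasDerivAt S (-(G (S t))) t)
    (hS0 : S 0 = E 0) :
    ∀ n : ℕ, E n ≤ S n := by
  -- G is monotone on nonneg reals
  have hGmono : ∀ a b : ℝ, 0 ≤ a → a ≤ b → G a ≤ G b := by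
    intro a b ha hab
    by_contra h
    push_neg at h
    have hb : (0:ℝ) ≤ b := ha.trans hab
    have h1 : Φ (G b) < Φ (G a) := hmono (hG b hb).1 (hG a ha).1 h
    have : b < a := by
      have := add_lt_add h h1
      rw [(hG b hb).2, (hG a ha).2] at this
      exact this
    linarith
  -- S is antitone on Ici 0
  have hAnti : AntitoneOn S (Set.Ici 0) := by
    apply antitoneOn_of_deriv_nonpos (convex_Ici 0)
    · intro t ht
      exact ((hS t ht).continuousAt).continuousWithinAt
    · intro t ht
      rw [interior_Ici] at ht
      exact (hS t ht.le).differentiableAt.differentiableWithinAt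
    · intro t ht
      rw [interior_Ici] at ht
      rw [(hS t ht.le).deriv]
      have := (hG (S t) (hSnonneg t ht.le)).1
      linarith
  intro n
  induction n with
  | zero => simp [hS0]
  | succ n ih =>
    have hn0 : (0:ℝ) ≤ (n:ℝ) := Nat.cast_nonneg n
    have hSn : 0 ≤ S n := hSnonneg n hn0
    -- step 1 : S n - G (S n) ≤ S (n+1)
    set f : ℝ → ℝ := fun t => S t + G (S n) * (t - n) with hf
    have hfMono : MonotoneOn f (Set.Icc (n:ℝ) ((n:ℝ)+1)) := by
      apply monotoneOn_of_deriv_nonneg (convex_Icc _ _)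
      · intro t ht
        have ht0 : (0:ℝ) ≤ t := hn0.trans ht.1
        exact (((hS t ht0).add (((hasDerivAt_id t).sub_const (n:ℝ)).const_mul
          (G (S n)))).continuousAt).continuousWithinAt
      · intro t ht
        rw [interior_Icc] at ht
        have ht0 : (0:ℝ) ≤ t := hn0.trans ht.1.le
        exact (((hS t ht0).add (((hasDerivAt_id t).sub_const (n:ℝ)).const_mul
          (G (S n)))).differentiableAt).differentiableWithinAt
      · intro t ht
        rw [interior_Icc] at ht
        have ht0 : (0:ℝ) ≤ t := hn0.trans ht.1.le
        have hd : HasDerivAt f (-(G (S t)) + G (S n) * 1) t := by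
          exact (hS t ht0).add (((hasDerivAt_id t).sub_const (n:ℝ)).const_mul
            (G (S n)))
        rw [hd.deriv]
        have hle : S t ≤ S n := hAnti (Set.mem_Ici.2 hn0) (Set.mem_Ici.2 ht0) ht.1.le
        have := hGmono (S t) (S n) (hSnonneg t ht0) hle
        simp only [mul_one]
        linarith
    have hstep : S n - G (S n) ≤ S ((n:ℝ)+1) := by
      have h1 := hfMono (Set.left_mem_Icc.2 (by linarith)) (Set.right_mem_Icc.2 (by linarith))
        (by linarith)
      simp only [hf] at h1
      simp only [sub_self, mul_zero, add_zero] at h1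
      have : ((n:ℝ)+1) - (n:ℝ) = 1 := by ring
      rw [this, mul_one] at h1
      linarith
    -- step 2 : z := S n - G (S n) satisfies z + Ψ z = S n
    have hz0 : (0:ℝ) ≤ S n - G (S n) := by
      have := (hG (S n) hSn).2
      have hΦ : Φ 0 ≤ Φ (G (S n)) := by
        rcases eq_or_lt_of_le (hG (S n) hSn).1 with h | h
        · rw [← h]
        · exact (hmono (Set.mem_Ici.2 le_rfl) (hG (S n) hSn).1 h).le
      rw [h0] at hΦ
      linarith
    set z := S n - G (S n) with hzdef
    have hzeq : Φ (G (S n)) = z := by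
      have := (hG (S n) hSn).2; linarith
    have hΨz : Ψ z = G (S n) := by
      have h1 : Φ (Ψ z) = z := (hΨ z hz0).2
      have := hmono.injOn (Set.mem_Ici.2 (hΨ z hz0).1) (Set.mem_Ici.2 (hG (S n) hSn).1)
        (by rw [h1, hzeq])
      exact this
    have hsum : z + Ψ z = S n := by rw [hΨz]; simp [hzdef]
    -- step 3 : E (n+1) ≤ z
    have hEz : E (n+1) ≤ z := by
      by_contra h
      push_neg at h
      have hΨmono : Ψ z ≤ Ψ (E (n+1)) := by
        by_contra h2
        push_neg at h2
        have := hmono (Set.mem_Ici.2 (hΨ (E (n+1)) (hEnonneg (n+1))).1)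
          (Set.mem_Ici.2 (hΨ z hz0).1) h2
        rw [(hΨ (E (n+1)) (hEnonneg (n+1))).2, (hΨ z hz0).2] at this
        linarith
      have := hE n
      have hEn : E n ≤ S n := ih
      linarith
    have : E (n+1) ≤ S ((n:ℝ)+1) := hEz.trans (by linarith)
    simpa using this
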